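/- Let π be a permutation of {0,…,n−1}. Consider the graph on vertex set {0,…,2n−1} with the natural order whose edges are e_j = {π(j), n+j} for j = 0,…,n−1. Then for any set J ⊆ {0,…,n−1} of edge indices: the edges {e_j : j ∈ J} form a stack with respect to the natural order if and only if π is strictly decreasing on J, and they form a queue if and only if π is strictly increasing on J. Consequently, this graph's edges can be partitioned into s stacks and q queues with respect to the natural order if and only if the sequence π(0),…,π(n−1) can be partitioned into s decreasing and q increasing subsequences. -/

import Mathlib

namespace MixedPaper

variable {V : Type*}

/-- Edges `e₁ = {a,b}` and `e₂ = {c,d}` cross in the pattern `a ≺ c ≺ b ≺ d`,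
with respect to the linear vertex order induced by the injection `f`.
(The symmetric pattern `c ≺ a ≺ d ≺ b` is `Cross f e₂ e₁`.) -/
def Cross (f : V → ℕ) (e₁ e₂ : Sym2 V) : Prop :=
  ∃ a b c d : V, e₁ = s(a, b) ∧ e₂ = s(c, d) ∧ f a < f c ∧ f c < f b ∧ f b < f d

/-- Edge `e₂ = {c,d}` nests inside `e₁ = {a,b}`: `a ≺ c ≺ d ≺ b`.
(The symmetric pattern `c ≺ a ≺ b ≺ d` is `Nest f e₂ e₁`.) -/
def Nest (f : V → ℕ) (e₁ e₂ : Sym2 V) : Prop :=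
  ∃ a b c d : V, e₁ = s(a, b) ∧ e₂ = s(c, d) ∧ f a < f c ∧ f c < f d ∧ f d < f b

/-- A set of edges is a stack (w.r.t. the order `f`) if no two of its edges cross. -/
def IsStack (f : V → ℕ) (S : Set (Sym2 V)) : Prop :=
  ∀ e₁ ∈ S, ∀ e₂ ∈ S, ¬ Cross f e₁ e₂

/-- A set of edges is a queue (w.r.t. the order `f`) if no two of its edges nest. -/
def IsQueue (f : V → ℕ) (S : Set (Sym2 V)) : Prop :=
  ∀ e₁ ∈ S, ∀ e₂ ∈ S, ¬ Nest f e₁ e₂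

/-- An `s`-stack `q`-queue layout of `G` with respect to the fixed vertex order `f`:
a partition of the edge set of `G` into `s` stacks and `q` queues (pages `0,…,s-1`
are stacks, pages `s,…,s+q-1` are queues). -/
def MixedLayoutOn (G : SimpleGraph V) (f : V → ℕ) (s q : ℕ) : Prop :=
  ∃ P : Sym2 V → ℕ,
    (∀ e ∈ G.edgeSet, P e < s + q) ∧
    (∀ i < s, IsStack f {e | e ∈ G.edgeSet ∧ P e = i}) ∧
    (∀ i, s ≤ i → i < s + q → IsQueue f {e | e ∈ G.edgeSet ∧ P e = i})

/-- `G` admits an `s`-stack `q`-queue layout (for some linear vertex order). -/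
def HasMixedLayout (G : SimpleGraph V) (s q : ℕ) : Prop :=
  ∃ f : V → ℕ, Function.Injective f ∧ MixedLayoutOn G f s q

/-- The mixed page number of `G`: the minimum `s + q` over all
`s`-stack `q`-queue layouts of `G`. -/
noncomputable def mixedPageNumber (G : SimpleGraph V) : ℕ :=
  sInf {k | ∃ s q, s + q = k ∧ HasMixedLayout G s q}

private lemma cross_iff (n : ℕ) (π : Equiv.Perm (Fin n)) (j k : Fin n) :
    Cross (id : ℕ → ℕ) s(((π j : ℕ)), n + (j : ℕ)) s(((π k : ℕ)), n + (k : ℕ)) ↔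
      ((π j : ℕ) < (π k : ℕ) ∧ (j : ℕ) < (k : ℕ)) := by
  have h1 : (π j : ℕ) < n := (π j).isLt
  have h2 : (π k : ℕ) < n := (π k).isLt
  constructor
  · rintro ⟨a, b, c, d, e1, e2, hac, hcb, hbd⟩
    rw [Sym2.eq_iff] at e1 e2
    simp only [id] at hac hcb hbd
    rcases e1 with ⟨rfl, rfl⟩ | ⟨rfl, rfl⟩ <;> rcases e2 with ⟨rfl, rfl⟩ | ⟨rfl, rfl⟩ <;> omega
  · rintro ⟨hp, hj⟩
    exact ⟨_, _, _, _, rfl, rfl, by simpa using hp, by simp; omega, by simp; omega⟩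

private lemma nest_iff (n : ℕ) (π : Equiv.Perm (Fin n)) (j k : Fin n) :
    Nest (id : ℕ → ℕ) s(((π j : ℕ)), n + (j : ℕ)) s(((π k : ℕ)), n + (k : ℕ)) ↔
      ((π j : ℕ) < (π k : ℕ) ∧ (k : ℕ) < (j : ℕ)) := by
  have h1 : (π j : ℕ) < n := (π j).isLt
  have h2 : (π k : ℕ) < n := (π k).isLt
  constructor
  · rintro ⟨a, b, c, d, e1, e2, hac, hcd, hdb⟩
    rw [Sym2.eq_iff] at e1 e2
    simp only [id] at hac hcd hdb
    rcases e1 with ⟨rfl, rfl⟩ | ⟨rfl, rfl⟩ <;> rcases e2 with ⟨rfl, rfl⟩ | ⟨rfl, rfl⟩ <;> omega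
  · rintro ⟨hp, hk⟩
    exact ⟨_, _, _, _, rfl, rfl, by simpa using hp, by simp; omega, by simp; omega⟩

private lemma stack_iff (n : ℕ) (π : Equiv.Perm (Fin n)) (J : Set (Fin n)) :
    IsStack (id : ℕ → ℕ) {e | ∃ j ∈ J, e = s(((π j : ℕ)), n + (j : ℕ))} ↔
      StrictAntiOn (fun j : Fin n => (π j : ℕ)) J := by
  constructor
  · intro hS j hj k hk hjk
    have hne : π j ≠ π k := fun h => absurd (π.injective h) (ne_of_lt hjk)
    have hne' : (π j : ℕ) ≠ (π k : ℕ) := fun h => hne (Fin.val_injective h)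
    rcases lt_or_gt_of_ne hne' with h | h
    · exact absurd ((cross_iff n π j k).mpr ⟨h, hjk⟩)
        (hS _ ⟨j, hj, rfl⟩ _ ⟨k, hk, rfl⟩)
    · exact h
  · rintro hA e₁ ⟨j, hj, rfl⟩ e₂ ⟨k, hk, rfl⟩ hC
    obtain ⟨hp, hjk⟩ := (cross_iff n π j k).mp hC
    exact absurd (hA hj hk (Fin.lt_def.mpr hjk)) hp.asymm

private lemma queue_iff (n : ℕ) (π : Equiv.Perm (Fin n)) (J : Set (Fin n)) :
    IsQueue (id : ℕ → ℕ) {e | ∃ j ∈ J, e = s(((π j : ℕ)), n + (j : ℕ))} ↔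
      StrictMonoOn (fun j : Fin n => (π j : ℕ)) J := by
  constructor
  · intro hS j hj k hk hjk
    have hne : π j ≠ π k := fun h => absurd (π.injective h) (ne_of_lt hjk)
    have hne' : (π j : ℕ) ≠ (π k : ℕ) := fun h => hne (Fin.val_injective h)
    rcases lt_or_gt_of_ne hne' with h | h
    · exact h
    · exact absurd ((nest_iff n π k j).mpr ⟨h, hjk⟩)
        (hS _ ⟨k, hk, rfl⟩ _ ⟨j, hj, rfl⟩)
  · rintro hA e₁ ⟨j, hj, rfl⟩ e₂ ⟨k, hk, rfl⟩ hC
    obtain ⟨hp, hkj⟩ := (nest_iff n π j k).mp hC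
    exact absurd (hA hk hj (Fin.lt_def.mpr hkj)) hp.asymm

/-- For a permutation `π` of `{0,…,n-1}`, consider the matching on the
vertex set `ℕ` (with its natural order) with edges `e_j = {π(j), n + j}`, `j = 0,…,n-1`.
For every index set `J`, the edges `{e_j : j ∈ J}` form a stack iff `π` is strictly
decreasing on `J`, and a queue iff `π` is strictly increasing on `J`. Consequently, the
edges can be partitioned into `s` stacks and `q` queues w.r.t. the natural order iff
`π(0),…,π(n-1)` can be partitioned into `s` decreasing and `q` increasing subsequences. -/
theorem matching_stack_queue_iff_monotone (n : ℕ) (π : Equiv.Perm (Fin n)) :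
    (∀ J : Set (Fin n),
      (IsStack (id : ℕ → ℕ) {e | ∃ j ∈ J, e = s(((π j : ℕ)), n + (j : ℕ))} ↔
        StrictAntiOn (fun j : Fin n => (π j : ℕ)) J) ∧
      (IsQueue (id : ℕ → ℕ) {e | ∃ j ∈ J, e = s(((π j : ℕ)), n + (j : ℕ))} ↔
        StrictMonoOn (fun j : Fin n => (π j : ℕ)) J)) ∧
    (∀ s q : ℕ,
      (∃ c : Fin n → ℕ, (∀ j, c j < s + q) ∧
        (∀ i < s,
          IsStack (id : ℕ → ℕ) {e | ∃ j : Fin n, c j = i ∧ e = s(((π j : ℕ)), n + (j : ℕ))}) ∧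
        (∀ i, s ≤ i → i < s + q →
          IsQueue (id : ℕ → ℕ) {e | ∃ j : Fin n, c j = i ∧ e = s(((π j : ℕ)), n + (j : ℕ))}))
      ↔
      (∃ c : Fin n → ℕ, (∀ j, c j < s + q) ∧
        (∀ i < s, StrictAntiOn (fun j : Fin n => (π j : ℕ)) {j | c j = i}) ∧
        (∀ i, s ≤ i → i < s + q →
          StrictMonoOn (fun j : Fin n => (π j : ℕ)) {j | c j = i}))) := by
  constructor
  · intro J
    exact ⟨stack_iff n π J, queue_iff n π J⟩
  · intro s q
    constructor
    · rintro ⟨c, hc, hs, hq⟩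
      refine ⟨c, hc, fun i hi => (stack_iff n π {j | c j = i}).mp ?_,
        fun i hi hi' => (queue_iff n π {j | c j = i}).mp ?_⟩
      · convert hs i hi using 2; rfl
      · convert hq i hi hi' using 2; rfl
    · rintro ⟨c, hc, hs, hq⟩
      refine ⟨c, hc, fun i hi => ?_, fun i hi hi' => ?_⟩
      · have := (stack_iff n π {j | c j = i}).mpr (hs i hi)
        convert this using 2; rfl
      · have := (queue_iff n π {j | c j = i}).mpr (hq i hi hi')
        convert this using 2; rfl


end MixedPaper
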